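/- arXiv:gr-qc/0207112 — 3 statements merged into one kernel-verified Lean document; each statement's English description precedes it below -/
import Mathlib

section
/- Let N be a natural number, let f : Fin N → (ℝ → ℝ) be a family of functions such that each f_k is continuously differentiable, 2π-periodic, strictly positive, and satisfies ∫₀^{2π} f_k(x) dx = 2π. Then the integral over the cube [0,2π]^N (with respect to N-dimensional Lebesgue measure) of (Σ_{i} f_i'(x_i)/f_i(x_i))² · ∏_{k} f_k(x_k) equals (2π)^{N-1} · Σ_{i} ∫₀^{2π} f_i'(x)²/f_i(x) dx. -/
open MeasureTheory Real

lemma indicator_pi_prod {N : ℕ} (I : Set ℝ) (h : Fin N → ℝ → ℝ) (x : Fin N → ℝ) :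
    Set.indicator (Set.pi Set.univ (fun _ : Fin N => I)) (fun x => ∏ k, h k (x k)) x
      = ∏ k, Set.indicator I (h k) (x k) := by
  classical
  by_cases hx : x ∈ Set.pi Set.univ (fun _ : Fin N => I)
  · rw [Set.indicator_of_mem hx]
    exact Finset.prod_congr rfl fun k _ => (Set.indicator_of_mem (hx k trivial) _).symm
  · rw [Set.indicator_of_notMem hx]
    rw [Set.mem_univ_pi] at hx
    push_neg at hx
    obtain ⟨k, hk⟩ := hx
    exact (Finset.prod_eq_zero (Finset.mem_univ k) (Set.indicator_of_notMem hk _)).symm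

lemma prod_integrableOn {N : ℕ} (h : Fin N → ℝ → ℝ) (hc : ∀ k, Continuous (h k)) :
    IntegrableOn (fun x : Fin N → ℝ => ∏ k, h k (x k))
      (Set.pi Set.univ (fun _ : Fin N => Set.Icc (0:ℝ) (2*π))) := by
  rw [← integrable_indicator_iff (MeasurableSet.univ_pi fun _ => measurableSet_Icc),
    funext (indicator_pi_prod (Set.Icc (0:ℝ) (2*π)) h)]
  exact Integrable.fintype_prod fun k => by
    rw [integrable_indicator_iff measurableSet_Icc]
    exact ((hc k).continuousOn).integrableOn_compact isCompact_Icc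

lemma prod_set_integral {N : ℕ} (h : Fin N → ℝ → ℝ) :
    ∫ x in Set.pi Set.univ (fun _ : Fin N => Set.Icc (0:ℝ) (2*π)), ∏ k, h k (x k)
      = ∏ k, ∫ x in Set.Icc (0:ℝ) (2*π), h k x := by
  rw [← integral_indicator (MeasurableSet.univ_pi fun _ => measurableSet_Icc)]
  simp only [indicator_pi_prod]
  rw [integral_fintype_prod_volume_eq_prod (fun k => Set.indicator (Set.Icc (0:ℝ) (2*π)) (h k))]
  exact Finset.prod_congr rfl fun k _ => integral_indicator measurableSet_Icc

lemma icc_eq_interval (g : ℝ → ℝ) :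
    ∫ x in Set.Icc (0:ℝ) (2*π), g x = ∫ x in (0:ℝ)..(2*π), g x := by
  rw [intervalIntegral.integral_of_le (by positivity), integral_Icc_eq_integral_Ioc]

/-- Equation (3.1): for a family of normalized, strictly positive, `2π`-periodic `C¹`
densities, the squared `L²`-norm of the flux derivation applied to the log of the
product density reduces to a sum of single-edge energies. -/
theorem flux_norm_squared_eq_sum_of_energies
    (N : ℕ) (f : Fin N → ℝ → ℝ)
    (hreg : ∀ k, ContDiff ℝ 1 (f k))
    (hper : ∀ k, Function.Periodic (f k) (2 * π))
    (hpos : ∀ k x, 0 < f k x)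
    (hnorm : ∀ k, ∫ x in (0 : ℝ)..(2 * π), f k x = 2 * π) :
    ∫ x in Set.pi Set.univ (fun _ : Fin N => Set.Icc (0 : ℝ) (2 * π)),
        (∑ i, deriv (f i) (x i) / f i (x i)) ^ 2 * ∏ k, f k (x k)
      = (2 * π) ^ (N - 1) * ∑ i, ∫ x in (0 : ℝ)..(2 * π), (deriv (f i) x) ^ 2 / f i x := by
  classical
  have hne : ∀ k x, f k x ≠ 0 := fun k x => (hpos k x).ne'
  have hdc : ∀ k, Continuous (deriv (f k)) := fun k => (hreg k).continuous_deriv le_rfl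
  -- the factor functions
  set H : Fin N → Fin N → Fin N → ℝ → ℝ :=
    fun i j k x => (if k = i then deriv (f k) x / f k x else 1) *
      ((if k = j then deriv (f k) x / f k x else 1) * f k x) with hH
  have hHcont : ∀ i j k, Continuous (H i j k) := by
    intro i j k
    have hg : Continuous (fun x => deriv (f k) x / f k x) :=
      (hdc k).div (hreg k).continuous (hne k)
    apply Continuous.mul
    · split_ifs <;> [exact hg; exact continuous_const]
    · apply Continuous.mul
      · split_ifs <;> [exact hg; exact continuous_const]
      · exact (hreg k).continuous
  -- pointwise expansion of the integrand
  have hpt : ∀ x : Fin N → ℝ,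
      (∑ i, deriv (f i) (x i) / f i (x i)) ^ 2 * ∏ k, f k (x k)
        = ∑ i, ∑ j, ∏ k, H i j k (x k) := by
    intro x
    rw [sq, Finset.sum_mul_sum, Finset.sum_mul]
    refine Finset.sum_congr rfl fun i _ => ?_
    rw [Finset.sum_mul]
    refine Finset.sum_congr rfl fun j _ => ?_
    simp only [hH, Finset.prod_mul_distrib, Finset.prod_ite_eq', Finset.mem_univ, if_true]
    ring
  simp only [hpt]
  -- swap integral and sums
  rw [integral_finset_sum _ fun i _ => integrable_finset_sum _
    fun j _ => prod_integrableOn _ (hHcont i j)]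
  have hswap : ∀ i : Fin N,
      (∫ x in Set.pi Set.univ (fun _ : Fin N => Set.Icc (0:ℝ) (2*π)),
        ∑ j, ∏ k, H i j k (x k))
      = ∑ j, ∫ x in Set.pi Set.univ (fun _ : Fin N => Set.Icc (0:ℝ) (2*π)),
          ∏ k, H i j k (x k) :=
    fun i => integral_finset_sum _ fun j _ => prod_integrableOn _ (hHcont i j)
  simp only [hswap, prod_set_integral]
  -- evaluate the single-edge integrals
  have hIf : ∀ k, ∫ x in Set.Icc (0:ℝ) (2*π), f k x = 2 * π := fun k => by
    rw [icc_eq_interval]; exact hnorm k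
  have hId : ∀ k, ∫ x in Set.Icc (0:ℝ) (2*π), deriv (f k) x = 0 := fun k => by
    rw [icc_eq_interval,
      intervalIntegral.integral_deriv_eq_sub
        (fun x _ => ((hreg k).differentiable one_ne_zero).differentiableAt)
        ((hdc k).intervalIntegrable _ _)]
    have := hper k 0
    rw [zero_add] at this
    rw [this, sub_self]
  -- off-diagonal terms vanish
  have hoff : ∀ i j : Fin N, i ≠ j →
      (∏ k, ∫ x in Set.Icc (0:ℝ) (2*π), H i j k x) = 0 := by
    intro i j hij
    refine Finset.prod_eq_zero (Finset.mem_univ i) ?_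
    have : H i j i = deriv (f i) := by
      funext x
      simp only [hH, if_pos rfl, if_neg hij, if_true, one_mul]
      rw [div_mul_cancel₀ _ (hne i x)]
    rw [this, hId]
  -- diagonal terms
  have hdiag : ∀ i : Fin N,
      (∏ k, ∫ x in Set.Icc (0:ℝ) (2*π), H i i k x)
        = (2*π) ^ (N-1) * ∫ x in (0:ℝ)..(2*π), (deriv (f i) x) ^ 2 / f i x := by
    intro i
    have hval : ∀ k, (∫ x in Set.Icc (0:ℝ) (2*π), H i i k x)
        = if k = i then ∫ x in (0:ℝ)..(2*π), (deriv (f i) x) ^ 2 / f i x else 2 * π := by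
      intro k
      by_cases hk : k = i
      · subst hk
        rw [if_pos rfl, icc_eq_interval]
        congr 1
        funext x
        simp only [hH, if_pos rfl, if_true]
        rw [div_mul_cancel₀ _ (hne _ x), div_mul_eq_mul_div, ← sq]
      · rw [if_neg hk]
        have : H i i k = f k := by
          funext x
          simp only [hH, if_neg hk, one_mul]
        rw [this, hIf]
    simp only [hval]
    rw [← Finset.mul_prod_erase Finset.univ _ (Finset.mem_univ i), if_pos rfl]
    rw [Finset.prod_congr rfl (fun k hk => if_neg (Finset.ne_of_mem_erase hk)),
      Finset.prod_const, Finset.card_erase_of_mem (Finset.mem_univ i), Finset.card_univ,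
      Fintype.card_fin]
    ring
  -- put everything together
  rw [Finset.mul_sum]
  refine Finset.sum_congr rfl fun i _ => ?_
  rw [Finset.sum_eq_single i (fun j _ hj => hoff i j (Ne.symm hj)) (by simp), hdiag]
end

section
/- Let F : ℝ³ → ℝ be a Schwartz function, and let e : ℝ → ℝ³ be continuously differentiable. For ε ∈ (0,1], define G_ε : ℝ³ → ℝ³ by G_ε(x) = ∫_{(1-ε)/2}^{(1+ε)/2} F(x − e(t)) · e'(t) dt. Then for every natural number k there is a constant C such that for all ε ∈ (0,1] and all x ∈ ℝ³, (1 + ‖x‖)^k · ‖G_ε(x)‖ ≤ C · ε. In particular, each weighted supremum sup_x (1 + ‖x‖)^k ‖G_ε(x)‖ tends to 0 as ε → 0. -/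
open MeasureTheory intervalIntegral

/-- The smeared form factor of the shortened edge `e_ε` tends to `0` in Schwartz space:
each Schwartz seminorm-type weighted supremum is bounded by `C·ε` and hence tends to
`0` as `ε → 0`. -/
theorem form_factor_schwartz_estimate
    (F : SchwartzMap (EuclideanSpace ℝ (Fin 3)) ℝ)
    (e : ℝ → EuclideanSpace ℝ (Fin 3)) (he : ContDiff ℝ 1 e) :
    ∀ k : ℕ,
      (∃ C : ℝ, ∀ ε ∈ Set.Ioc (0 : ℝ) 1, ∀ x : EuclideanSpace ℝ (Fin 3),
        (1 + ‖x‖) ^ k * ‖∫ t in ((1 - ε) / 2)..((1 + ε) / 2), F (x - e t) • deriv e t‖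
          ≤ C * ε) ∧
      Filter.Tendsto
        (fun ε : ℝ => ⨆ x : EuclideanSpace ℝ (Fin 3),
          (1 + ‖x‖) ^ k * ‖∫ t in ((1 - ε) / 2)..((1 + ε) / 2), F (x - e t) • deriv e t‖)
        (nhdsWithin 0 (Set.Ioc (0 : ℝ) 1)) (nhds 0) := by
  intro k
  -- bound on `e` on `[0,1]`
  obtain ⟨M₀, hM₀⟩ := (isCompact_Icc (a := (0:ℝ)) (b := 1)).exists_bound_of_continuousOn
    he.continuous.continuousOn
  -- bound on `deriv e` on `[0,1]`
  obtain ⟨M₁, hM₁⟩ := (isCompact_Icc (a := (0:ℝ)) (b := 1)).exists_bound_of_continuousOn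
    (he.continuous_deriv le_rfl).continuousOn
  set M : ℝ := max M₀ 0 with hMdef
  set M' : ℝ := max M₁ 0 with hM'def
  have hM : ∀ t ∈ Set.Icc (0:ℝ) 1, ‖e t‖ ≤ M := fun t ht => (hM₀ t ht).trans (le_max_left _ _)
  have hM' : ∀ t ∈ Set.Icc (0:ℝ) 1, ‖deriv e t‖ ≤ M' :=
    fun t ht => (hM₁ t ht).trans (le_max_left _ _)
  have hMnn : (0:ℝ) ≤ M := le_max_right _ _
  have hM'nn : (0:ℝ) ≤ M' := le_max_right _ _
  -- Schwartz decay
  set B : ℝ := 2 ^ k * ((Finset.Iic (k, 0)).sup (schwartzSeminormFamily ℝ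
      (EuclideanSpace ℝ (Fin 3)) ℝ)) F with hBdef
  have hB : ∀ y : EuclideanSpace ℝ (Fin 3), (1 + ‖y‖) ^ k * |F y| ≤ B := by
    intro y
    have := SchwartzMap.one_add_le_sup_seminorm_apply (𝕜 := ℝ) (m := (k, 0))
      (le_refl k) (le_refl 0) F y
    simp only [norm_iteratedFDeriv_zero, Real.norm_eq_abs] at this
    exact this
  have hBnn : (0:ℝ) ≤ B := by
    have := hB 0
    nlinarith [abs_nonneg (F 0), pow_nonneg (by positivity : (0:ℝ) ≤ 1 + ‖(0:EuclideanSpace ℝ (Fin 3))‖) k]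
  set K : ℝ := B * ((1 + M) ^ k * M') with hKdef
  have hKnn : (0:ℝ) ≤ K := by positivity
  -- main bound
  have hbound : ∀ ε ∈ Set.Ioc (0 : ℝ) 1, ∀ x : EuclideanSpace ℝ (Fin 3),
      (1 + ‖x‖) ^ k * ‖∫ t in ((1 - ε) / 2)..((1 + ε) / 2), F (x - e t) • deriv e t‖
        ≤ K * ε := by
    intro ε hε x
    obtain ⟨hε0, hε1⟩ := hε
    have hxpos : (0:ℝ) < (1 + ‖x‖) ^ k := by positivity
    have hsub : Set.uIoc ((1 - ε) / 2) ((1 + ε) / 2) ⊆ Set.Icc (0:ℝ) 1 := by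
      rw [Set.uIoc_of_le (by linarith)]
      intro t ht
      exact ⟨le_of_lt (lt_of_le_of_lt (by linarith) ht.1), ht.2.trans (by linarith)⟩
    have hnorm : ‖∫ t in ((1 - ε) / 2)..((1 + ε) / 2), F (x - e t) • deriv e t‖
        ≤ (K / (1 + ‖x‖) ^ k) * |((1 + ε) / 2) - ((1 - ε) / 2)| := by
      apply intervalIntegral.norm_integral_le_of_norm_le_const
      intro t ht
      have htI := hsub ht
      rw [norm_smul, Real.norm_eq_abs, le_div_iff₀ hxpos]
      have htri : (1 + ‖x‖) ^ k ≤ (1 + ‖x - e t‖) ^ k * (1 + ‖e t‖) ^ k := by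
        rw [← mul_pow]
        apply pow_le_pow_left₀ (by positivity)
        have := norm_sub_norm_le x (e t)
        nlinarith [norm_nonneg (x - e t), norm_nonneg (e t), norm_sub_rev x (e t)]
      have h1 : |F (x - e t)| * ‖deriv e t‖ * (1 + ‖x‖) ^ k
          ≤ ((1 + ‖x - e t‖) ^ k * |F (x - e t)|) * ((1 + ‖e t‖) ^ k * ‖deriv e t‖) := by
        have h2 : |F (x - e t)| * ‖deriv e t‖ * (1 + ‖x‖) ^ k
            ≤ |F (x - e t)| * ‖deriv e t‖ * ((1 + ‖x - e t‖) ^ k * (1 + ‖e t‖) ^ k) :=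
          mul_le_mul_of_nonneg_left htri (by positivity)
        calc |F (x - e t)| * ‖deriv e t‖ * (1 + ‖x‖) ^ k
            ≤ |F (x - e t)| * ‖deriv e t‖ * ((1 + ‖x - e t‖) ^ k * (1 + ‖e t‖) ^ k) := h2
          _ = ((1 + ‖x - e t‖) ^ k * |F (x - e t)|) * ((1 + ‖e t‖) ^ k * ‖deriv e t‖) := by ring
      refine h1.trans ?_
      rw [hKdef]
      apply mul_le_mul (hB _) ?_ (by positivity) hBnn
      exact mul_le_mul (pow_le_pow_left₀ (by positivity) (by linarith [hM t htI]) k)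
        (hM' t htI) (norm_nonneg _) (by positivity)
    have habs : |((1 + ε) / 2) - ((1 - ε) / 2)| = ε := by
      rw [abs_of_nonneg (by linarith)]; ring
    rw [habs] at hnorm
    calc (1 + ‖x‖) ^ k * ‖∫ t in ((1 - ε) / 2)..((1 + ε) / 2), F (x - e t) • deriv e t‖
        ≤ (1 + ‖x‖) ^ k * ((K / (1 + ‖x‖) ^ k) * ε) :=
          mul_le_mul_of_nonneg_left hnorm (le_of_lt hxpos)
      _ = K * ε := by field_simp
  refine ⟨⟨K, hbound⟩, ?_⟩
  have hmem : ∀ᶠ ε in nhdsWithin (0:ℝ) (Set.Ioc 0 1), ε ∈ Set.Ioc (0:ℝ) 1 :=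
    eventually_mem_nhdsWithin
  have htendK : Filter.Tendsto (fun ε : ℝ => K * ε) (nhdsWithin 0 (Set.Ioc (0:ℝ) 1)) (nhds 0) := by
    have : Filter.Tendsto (fun ε : ℝ => K * ε) (nhds 0) (nhds (K * 0)) :=
      (continuous_const.mul continuous_id).tendsto 0
    simpa using this.mono_left nhdsWithin_le_nhds
  apply squeeze_zero'
  · filter_upwards [hmem] with ε hε
    have hbdd : BddAbove (Set.range fun x : EuclideanSpace ℝ (Fin 3) =>
        (1 + ‖x‖) ^ k * ‖∫ t in ((1 - ε) / 2)..((1 + ε) / 2), F (x - e t) • deriv e t‖) := by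
      refine ⟨K * ε, ?_⟩
      rintro _ ⟨x, rfl⟩
      exact hbound ε hε x
    refine le_trans ?_ (le_ciSup hbdd 0)
    positivity
  · filter_upwards [hmem] with ε hε
    exact ciSup_le fun x => hbound ε hε x
  · exact htendK
end

section
/- Let (Ω, Σ, μ) be a finite measure space and let D be a set of bounded measurable functions Ω → ℂ that forms a complex subalgebra closed under complex conjugation. Let X : D → D be a ℂ-linear map satisfying the Leibniz rule X(a·b) = X(a)·b + a·X(b) for all a, b ∈ D, and commuting with complex conjugation: X(conj a) = conj(X a). Let G : Ω → ℝ be a bounded measurable real-valued function such that ∫ X(c) dμ = ∫ c·G dμ for all c ∈ D. Then the operator π defined on D by π(a) = i·X(a) − (i/2)·G·a is symmetric on D with respect to the L²(μ) inner product: for all a, b ∈ D, ⟨π(a), b⟩_{L²(μ)} = ⟨a, π(b)⟩_{L²(μ)}. -/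
open MeasureTheory ComplexConjugate

set_option synthInstance.maxHeartbeats 400000
set_option maxHeartbeats 2000000

/-- Sufficiency direction of the admissibility criterion: if the divergence of the
measure with respect to a real derivation `X` on a conjugation-closed algebra `D` of
bounded measurable functions is given by a bounded measurable real function `G`, then
`π(a) = i·X(a) − (i/2)·G·a` is symmetric on `D` w.r.t. the `L²(μ)` inner product. -/
theorem corrected_flux_operator_symmetric
    {Ω : Type*} [MeasurableSpace Ω] (μ : Measure Ω) [IsFiniteMeasure μ]
    (D : Subalgebra ℂ (Ω → ℂ))
    (hmeas : ∀ a ∈ D, Measurable a)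
    (hbdd : ∀ a ∈ D, ∃ M : ℝ, ∀ ω, ‖a ω‖ ≤ M)
    (hconj : ∀ a ∈ D, (fun ω => conj (a ω)) ∈ D)
    (X : D →ₗ[ℂ] D)
    (hLeib : ∀ a b : D, X (a * b) = X a * b + a * X b)
    (hXconj : ∀ a b : D, ((b : Ω → ℂ) = fun ω => conj ((a : Ω → ℂ) ω)) →
      ((X b : Ω → ℂ) = fun ω => conj ((X a : Ω → ℂ) ω)))
    (G : Ω → ℝ) (hGmeas : Measurable G) (hGbdd : ∃ M : ℝ, ∀ ω, |G ω| ≤ M)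
    (hdiv : ∀ a : D, ∫ ω, (X a : Ω → ℂ) ω ∂μ = ∫ ω, (a : Ω → ℂ) ω * (G ω : ℂ) ∂μ) :
    ∀ a b : D,
      ∫ ω, conj (Complex.I * (X a : Ω → ℂ) ω - Complex.I / 2 * (G ω : ℂ) * (a : Ω → ℂ) ω)
          * (b : Ω → ℂ) ω ∂μ
        = ∫ ω, conj ((a : Ω → ℂ) ω)
          * (Complex.I * (X b : Ω → ℂ) ω - Complex.I / 2 * (G ω : ℂ) * (b : Ω → ℂ) ω) ∂μ := by
  intro a b
  obtain ⟨MG, hMG⟩ := hGbdd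
  -- every element of D is integrable
  have hD : ∀ x : D, Integrable ((x : Ω → ℂ)) μ := by
    intro x
    obtain ⟨M, hM⟩ := hbdd x x.2
    exact ⟨(hmeas x x.2).aestronglyMeasurable,
      HasFiniteIntegral.of_bounded (C := M) (Filter.Eventually.of_forall hM)⟩
  have hGC : Measurable (fun ω => (G ω : ℂ)) := Complex.measurable_ofReal.comp hGmeas
  -- the conjugate of a, as an element of D
  set a' : D := ⟨fun ω => conj ((a : Ω → ℂ) ω), hconj a a.2⟩ with ha'
  have hXa' : ((X a' : Ω → ℂ)) = fun ω => conj ((X a : Ω → ℂ) ω) := hXconj a a' rfl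
  set c : D := a' * b with hc
  have hcω : ∀ ω, (c : Ω → ℂ) ω = conj ((a : Ω → ℂ) ω) * (b : Ω → ℂ) ω := fun ω => rfl
  -- integrability of G·c
  have hGc : Integrable (fun ω => (G ω : ℂ) * (c : Ω → ℂ) ω) μ := by
    refine (hD c).bdd_mul (c := MG) hGC.aestronglyMeasurable (Filter.Eventually.of_forall fun ω => ?_)
    simpa using hMG ω
  -- pointwise decompositions of the two integrands
  have e1 : ∀ ω,
      conj (Complex.I * (X a : Ω → ℂ) ω - Complex.I / 2 * (G ω : ℂ) * (a : Ω → ℂ) ω)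
        * (b : Ω → ℂ) ω
      = (-Complex.I) * ((X a' * b : D) : Ω → ℂ) ω
        + (Complex.I / 2) * ((G ω : ℂ) * (c : Ω → ℂ) ω) := by
    intro ω
    have h1 : ((X a' * b : D) : Ω → ℂ) ω = conj ((X a : Ω → ℂ) ω) * (b : Ω → ℂ) ω := by
      have : ((X a' * b : D) : Ω → ℂ) ω = (X a' : Ω → ℂ) ω * (b : Ω → ℂ) ω := rfl
      rw [this, hXa']
    rw [h1, hcω]
    simp only [map_sub, map_mul, Complex.conj_I, map_div₀, Complex.conj_ofReal,
      map_ofNat]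
    ring
  have e2 : ∀ ω,
      conj ((a : Ω → ℂ) ω)
        * (Complex.I * (X b : Ω → ℂ) ω - Complex.I / 2 * (G ω : ℂ) * (b : Ω → ℂ) ω)
      = Complex.I * ((a' * X b : D) : Ω → ℂ) ω
        - (Complex.I / 2) * ((G ω : ℂ) * (c : Ω → ℂ) ω) := by
    intro ω
    have h1 : ((a' * X b : D) : Ω → ℂ) ω = conj ((a : Ω → ℂ) ω) * (X b : Ω → ℂ) ω := rfl
    rw [h1, hcω]
    ring
  -- the three basic integrals
  set A : ℂ := ∫ ω, ((X a' * b : D) : Ω → ℂ) ω ∂μ with hA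
  set B : ℂ := ∫ ω, ((a' * X b : D) : Ω → ℂ) ω ∂μ with hB
  set Gc : ℂ := ∫ ω, (G ω : ℂ) * (c : Ω → ℂ) ω ∂μ with hGcI
  -- Leibniz + divergence:  A + B = Gc
  have hsum : A + B = Gc := by
    have hXc : ∫ ω, (X c : Ω → ℂ) ω ∂μ = A + B := by
      have hcoe : (X c : Ω → ℂ)
          = fun ω => ((X a' * b : D) : Ω → ℂ) ω + ((a' * X b : D) : Ω → ℂ) ω := by
        rw [hc, hLeib a' b]; rfl
      rw [hcoe]
      exact integral_add (hD (X a' * b)) (hD (a' * X b))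
    have hdc := hdiv c
    rw [hXc] at hdc
    rw [hdc, hGcI]
    exact integral_congr_ae (Filter.Eventually.of_forall fun ω => mul_comm _ _)
  -- compute both sides
  have lhs_eq :
      (∫ ω, conj (Complex.I * (X a : Ω → ℂ) ω - Complex.I / 2 * (G ω : ℂ) * (a : Ω → ℂ) ω)
          * (b : Ω → ℂ) ω ∂μ)
      = (-Complex.I) * A + (Complex.I / 2) * Gc := by
    rw [integral_congr_ae (Filter.Eventually.of_forall e1),
      integral_add (((hD (X a' * b)).const_mul _)) (hGc.const_mul _),
      integral_const_mul, integral_const_mul]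
  have rhs_eq :
      (∫ ω, conj ((a : Ω → ℂ) ω)
          * (Complex.I * (X b : Ω → ℂ) ω - Complex.I / 2 * (G ω : ℂ) * (b : Ω → ℂ) ω) ∂μ)
      = Complex.I * B - (Complex.I / 2) * Gc := by
    rw [integral_congr_ae (Filter.Eventually.of_forall e2),
      integral_sub (((hD (a' * X b)).const_mul _)) (hGc.const_mul _),
      integral_const_mul, integral_const_mul]
  rw [lhs_eq, rhs_eq]
  linear_combination (-Complex.I) * hsum
end
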